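/- Let τ > 0 and z, k ∈ ℝ, and define the Black-Scholes call price u^BS(σ) = e^z Φ(d₊(σ)) − e^k Φ(d₋(σ)) for σ > 0, where d±(σ) = (z − k ± σ²τ/2)/(σ√τ) and Φ is the standard normal CDF. Then for every real u with max(e^z − e^k, 0) < u < e^z, there exists a unique σ > 0 such that u^BS(σ) = u. -/

import Mathlib

open Real MeasureTheory Filter Set Topology

/-- The standard normal CDF. -/
noncomputable def normCDF (x : ℝ) : ℝ :=
  ∫ t in Set.Iic x, (2 * π) ^ (-(1 : ℝ) / 2) * Real.exp (-t ^ 2 / 2)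

noncomputable def npdf (t : ℝ) : ℝ := (2 * π) ^ (-(1 : ℝ) / 2) * Real.exp (-t ^ 2 / 2)

lemma npdf_pos (t : ℝ) : 0 < npdf t :=
  mul_pos (rpow_pos_of_pos (by positivity) _) (exp_pos _)

lemma npdf_eq (t : ℝ) : npdf t = (2 * π) ^ (-(1 : ℝ) / 2) * Real.exp (-(1/2) * t ^ 2) := by
  rw [npdf]; ring_nf

lemma npdf_integrable : Integrable npdf := by
  have h := (integrable_exp_neg_mul_sq (by norm_num : (0:ℝ) < 1/2)).const_mul
    ((2 * π) ^ (-(1 : ℝ) / 2))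
  exact h.congr (Filter.Eventually.of_forall fun t => (npdf_eq t).symm)

lemma npdf_continuous : Continuous npdf := by
  unfold npdf; continuity

lemma integral_npdf : ∫ t, npdf t = 1 := by
  have h : ∫ t, npdf t = (2 * π) ^ (-(1 : ℝ) / 2) * ∫ t : ℝ, Real.exp (-(1/2) * t ^ 2) := by
    rw [← integral_const_mul]; congr 1; funext t; rw [npdf_eq]
  rw [h, integral_gaussian]
  have h2 : √(π / (1/2)) = √(2 * π) := by norm_num [mul_comm]
  rw [h2, sqrt_eq_rpow, ← rpow_add (by positivity)]
  norm_num

lemma normCDF_eq (x : ℝ) : normCDF x = ∫ t in Set.Iic x, npdf t := rfl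

lemma normCDF_tendsto_atTop : Tendsto normCDF atTop (𝓝 1) := by
  have h := tendsto_setIntegral_of_monotone (f := npdf) (μ := volume)
    (s := fun x : ℝ => Iic x) (fun i => measurableSet_Iic)
    (fun a b hab => Iic_subset_Iic.mpr hab) ?_
  · have hU : ⋃ x : ℝ, Iic x = univ := by
      apply eq_univ_of_forall; intro x; exact mem_iUnion.2 ⟨x, le_refl x⟩
    rw [hU] at h
    show Tendsto (fun x => ∫ t in Iic x, npdf t) atTop (𝓝 1)
    simpa [normCDF_eq, Measure.restrict_univ, integral_npdf] using h
  · exact npdf_integrable.integrableOn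

lemma normCDF_tendsto_atBot : Tendsto normCDF atBot (𝓝 0) := by
  have h := tendsto_setIntegral_of_antitone (f := npdf) (μ := volume)
    (s := fun x : ℝ => Iic (-x)) (fun i => measurableSet_Iic)
    (fun a b hab => Iic_subset_Iic.mpr (by linarith)) ⟨0, npdf_integrable.integrableOn⟩
  have hI : ⋂ x : ℝ, Iic (-x) = ∅ := by
    apply eq_empty_iff_forall_notMem.mpr; intro x hx
    simp only [mem_iInter, mem_Iic] at hx
    linarith [hx (-(x - 1))]
  rw [hI] at h
  simp only [Measure.restrict_empty, integral_zero_measure] at h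
  have : Tendsto (fun x : ℝ => -x) atBot atTop := tendsto_neg_atBot_atTop
  have h2 := h.comp this
  refine h2.congr fun x => ?_
  simp [normCDF_eq]

lemma normCDF_hasDerivAt (x : ℝ) : HasDerivAt normCDF (npdf x) x := by
  have key : ∀ y : ℝ, normCDF y = (∫ t in Set.Iic 0, npdf t) + ∫ t in (0:ℝ)..y, npdf t := by
    intro y
    rw [normCDF_eq, ← intervalIntegral.integral_Iic_sub_Iic npdf_integrable.integrableOn
      npdf_integrable.integrableOn]
    ring
  have h : HasDerivAt (fun y => ∫ t in (0:ℝ)..y, npdf t) (npdf x) x :=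
    intervalIntegral.integral_hasDerivAt_right
      (npdf_integrable.intervalIntegrable)
      (npdf_continuous.stronglyMeasurableAtFilter _ _)
      npdf_continuous.continuousAt
  have := (h.const_add (∫ t in Set.Iic 0, npdf t))
  exact this.congr_of_eventuallyEq (Filter.Eventually.of_forall fun y => (key y))

lemma normCDF_continuous : Continuous normCDF :=
  continuous_iff_continuousAt.mpr fun x => (normCDF_hasDerivAt x).continuousAt


/-- The Black-Scholes call price as a function of volatility `σ`. -/
noncomputable def uBS (τ z k σ : ℝ) : ℝ :=
  Real.exp z * normCDF ((z - k + σ ^ 2 * τ / 2) / (σ * Real.sqrt τ))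
    - Real.exp k * normCDF ((z - k - σ ^ 2 * τ / 2) / (σ * Real.sqrt τ))

section Main
variable {τ z k : ℝ}

lemma key_identity (hτ : 0 < τ) {σ : ℝ} (hσ : 0 < σ) :
    Real.exp k * npdf ((z - k - σ ^ 2 * τ / 2) / (σ * Real.sqrt τ))
      = Real.exp z * npdf ((z - k + σ ^ 2 * τ / 2) / (σ * Real.sqrt τ)) := by
  have hst : (0:ℝ) < Real.sqrt τ := Real.sqrt_pos.mpr hτ
  have hs : σ * Real.sqrt τ ≠ 0 := by positivity
  have hs2 : (σ * Real.sqrt τ) ^ 2 = σ ^ 2 * τ := by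
    rw [mul_pow, Real.sq_sqrt hτ.le]
  unfold npdf
  rw [mul_left_comm, mul_left_comm (Real.exp z), ← Real.exp_add, ← Real.exp_add]
  congr 1
  rw [div_pow, div_pow, hs2]
  have hσ2τ : σ ^ 2 * τ ≠ 0 := by positivity
  field_simp
  ring

lemma uBS_hasDerivAt (hτ : 0 < τ) {σ : ℝ} (hσ : 0 < σ) :
    HasDerivAt (uBS τ z k)
      (Real.exp z * npdf ((z - k + σ ^ 2 * τ / 2) / (σ * Real.sqrt τ)) * Real.sqrt τ) σ := by
  have hst : (0:ℝ) < Real.sqrt τ := Real.sqrt_pos.mpr hτ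
  have hs : σ * Real.sqrt τ ≠ 0 := by positivity
  have h1 : HasDerivAt (fun x : ℝ => x ^ 2) (2 * σ) σ := by
    simpa using hasDerivAt_pow 2 σ
  have hnp : HasDerivAt (fun x : ℝ => z - k + x ^ 2 * τ / 2) (2 * σ * τ / 2) σ :=
    ((h1.mul_const τ).div_const 2).const_add (z - k)
  have hnm : HasDerivAt (fun x : ℝ => z - k - x ^ 2 * τ / 2) (-(2 * σ * τ / 2)) σ :=
    ((h1.mul_const τ).div_const 2).const_sub (z - k)
  have hden : HasDerivAt (fun x : ℝ => x * Real.sqrt τ) (Real.sqrt τ) σ :=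
    hasDerivAt_mul_const _
  have hdp := hnp.div hden hs
  have hdm := hnm.div hden hs
  have hΦp := ((normCDF_hasDerivAt _).comp σ hdp).const_mul (Real.exp z)
  have hΦm := ((normCDF_hasDerivAt _).comp σ hdm).const_mul (Real.exp k)
  have hF := hΦp.sub hΦm
  refine hF.congr_deriv ?_
  symm
  simp only [Pi.div_apply]
  rw [← mul_assoc (Real.exp k), key_identity hτ hσ]
  have hσ2τ : σ ^ 2 * τ ≠ 0 := by positivity
  set A := npdf ((z - k + σ ^ 2 * τ / 2) / (σ * Real.sqrt τ)) with hA
  set P := (2 * σ * τ / 2 * (σ * Real.sqrt τ) - (z - k + σ ^ 2 * τ / 2) * Real.sqrt τ)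
      / (σ * Real.sqrt τ) ^ 2 with hP
  set M := (-(2 * σ * τ / 2) * (σ * Real.sqrt τ) - (z - k - σ ^ 2 * τ / 2) * Real.sqrt τ)
      / (σ * Real.sqrt τ) ^ 2 with hM
  have hPM : P - M = Real.sqrt τ := by
    rw [hP, hM, div_sub_div_same, mul_pow, Real.sq_sqrt hτ.le, div_eq_iff hσ2τ]
    ring
  clear_value A P M
  linear_combination (-(Real.exp z * A)) * hPM

end Main

section Limits
variable {τ z k : ℝ}

lemma half_div (hτ : 0 < τ) {σ : ℝ} (hσ : 0 < σ) :
    σ ^ 2 * τ / 2 / (σ * Real.sqrt τ) = σ * Real.sqrt τ / 2 := by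
  have hst : (0:ℝ) < Real.sqrt τ := Real.sqrt_pos.mpr hτ
  have h2 : σ ^ 2 * τ = (σ * Real.sqrt τ) * (σ * Real.sqrt τ) := by
    linear_combination (-(σ ^ 2)) * Real.mul_self_sqrt hτ.le
  rw [h2]
  field_simp

lemma dp_split (hτ : 0 < τ) {σ : ℝ} (hσ : 0 < σ) (c : ℝ) :
    (c + σ ^ 2 * τ / 2) / (σ * Real.sqrt τ)
      = c * (σ * Real.sqrt τ)⁻¹ + σ * Real.sqrt τ / 2 := by
  rw [add_div, half_div hτ hσ, div_eq_mul_inv]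

lemma dm_split (hτ : 0 < τ) {σ : ℝ} (hσ : 0 < σ) (c : ℝ) :
    (c - σ ^ 2 * τ / 2) / (σ * Real.sqrt τ)
      = c * (σ * Real.sqrt τ)⁻¹ - σ * Real.sqrt τ / 2 := by
  rw [sub_div, half_div hτ hσ, div_eq_mul_inv]

lemma tendsto_uBS_atTop (hτ : 0 < τ) :
    Tendsto (uBS τ z k) atTop (𝓝 (Real.exp z)) := by
  have hst : (0:ℝ) < Real.sqrt τ := Real.sqrt_pos.mpr hτ
  have hg : Tendsto (fun σ : ℝ => σ * Real.sqrt τ) atTop atTop :=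
    tendsto_id.atTop_mul_const hst
  have h1 : Tendsto (fun σ : ℝ => (z - k) * (σ * Real.sqrt τ)⁻¹) atTop (𝓝 0) := by
    have := Tendsto.div_atTop (tendsto_const_nhds (x := z - k)) hg
    simpa [div_eq_mul_inv] using this
  have h2 : Tendsto (fun σ : ℝ => σ * Real.sqrt τ / 2) atTop atTop :=
    hg.atTop_div_const two_pos
  have hdp : Tendsto (fun σ : ℝ => (z - k + σ ^ 2 * τ / 2) / (σ * Real.sqrt τ)) atTop atTop := by
    have heq : (fun σ : ℝ => (z - k + σ ^ 2 * τ / 2) / (σ * Real.sqrt τ))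
        =ᶠ[atTop] fun σ => (z - k) * (σ * Real.sqrt τ)⁻¹ + σ * Real.sqrt τ / 2 := by
      filter_upwards [eventually_gt_atTop (0:ℝ)] with σ hσ
      exact dp_split hτ hσ _
    refine Tendsto.congr' heq.symm ?_
    exact tendsto_atTop_add_left_of_le' _ (-1)
      (h1.eventually (eventually_ge_nhds (by norm_num : (-1:ℝ) < 0))) h2
  have hdm : Tendsto (fun σ : ℝ => (z - k - σ ^ 2 * τ / 2) / (σ * Real.sqrt τ)) atTop atBot := by
    have heq : (fun σ : ℝ => (z - k - σ ^ 2 * τ / 2) / (σ * Real.sqrt τ))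
        =ᶠ[atTop] fun σ => (z - k) * (σ * Real.sqrt τ)⁻¹ - σ * Real.sqrt τ / 2 := by
      filter_upwards [eventually_gt_atTop (0:ℝ)] with σ hσ
      exact dm_split hτ hσ _
    refine Tendsto.congr' heq.symm ?_
    have h2' : Tendsto (fun σ : ℝ => -(σ * Real.sqrt τ / 2)) atTop atBot :=
      tendsto_neg_atTop_atBot.comp h2
    have := tendsto_atBot_add_left_of_ge' atTop (1:ℝ)
      (h1.eventually (eventually_le_nhds (by norm_num : (0:ℝ) < 1))) h2'
    simpa [sub_eq_add_neg] using this
  have := ((normCDF_tendsto_atTop.comp hdp).const_mul (Real.exp z)).sub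
    ((normCDF_tendsto_atBot.comp hdm).const_mul (Real.exp k))
  unfold uBS
  simpa [uBS, Function.comp] using this

lemma tendsto_uBS_zero (hτ : 0 < τ) :
    Tendsto (uBS τ z k) (𝓝[>] (0:ℝ)) (𝓝 (max (Real.exp z - Real.exp k) 0)) := by
  have hst : (0:ℝ) < Real.sqrt τ := Real.sqrt_pos.mpr hτ
  have hc : Continuous (fun σ : ℝ => σ * Real.sqrt τ) := continuous_id.mul continuous_const
  have hs0 : Tendsto (fun σ : ℝ => σ * Real.sqrt τ) (𝓝[>] 0) (𝓝[>] 0) := by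
    rw [tendsto_nhdsWithin_iff]
    constructor
    · have := (hc.tendsto 0).mono_left (nhdsWithin_le_nhds (s := Set.Ioi (0:ℝ)))
      simpa using this
    · filter_upwards [self_mem_nhdsWithin] with σ (hσ : 0 < σ)
      exact mul_pos hσ hst
  have hs0' : Tendsto (fun σ : ℝ => σ * Real.sqrt τ) (𝓝[>] 0) (𝓝 0) :=
    hs0.mono_right nhdsWithin_le_nhds
  have hinv : Tendsto (fun σ : ℝ => (σ * Real.sqrt τ)⁻¹) (𝓝[>] 0) atTop :=
    tendsto_inv_nhdsGT_zero.comp hs0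
  have hhalf : Tendsto (fun σ : ℝ => σ * Real.sqrt τ / 2) (𝓝[>] 0) (𝓝 0) := by
    simpa using hs0'.div_const 2
  have hhalfneg : Tendsto (fun σ : ℝ => -(σ * Real.sqrt τ / 2)) (𝓝[>] 0) (𝓝 0) := by
    simpa using hhalf.neg
  have heqp : (fun σ : ℝ => (z - k + σ ^ 2 * τ / 2) / (σ * Real.sqrt τ))
      =ᶠ[𝓝[>] (0:ℝ)] fun σ => (z - k) * (σ * Real.sqrt τ)⁻¹ + σ * Real.sqrt τ / 2 := by
    filter_upwards [self_mem_nhdsWithin] with σ (hσ : 0 < σ)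
    exact dp_split hτ hσ _
  have heqm : (fun σ : ℝ => (z - k - σ ^ 2 * τ / 2) / (σ * Real.sqrt τ))
      =ᶠ[𝓝[>] (0:ℝ)] fun σ => (z - k) * (σ * Real.sqrt τ)⁻¹ - σ * Real.sqrt τ / 2 := by
    filter_upwards [self_mem_nhdsWithin] with σ (hσ : 0 < σ)
    exact dm_split hτ hσ _
  rcases lt_trichotomy (z - k) 0 with hm | hm | hm
  · -- z < k : both d± → -∞, limit 0
    have hmax : max (Real.exp z - Real.exp k) 0 = 0 :=
      max_eq_right (sub_nonpos.mpr (Real.exp_le_exp.mpr (by linarith)))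
    have hMinv : Tendsto (fun σ : ℝ => (z - k) * (σ * Real.sqrt τ)⁻¹) (𝓝[>] 0) atBot :=
      hinv.const_mul_atTop_of_neg hm
    have hdp : Tendsto (fun σ : ℝ => (z - k + σ ^ 2 * τ / 2) / (σ * Real.sqrt τ))
        (𝓝[>] 0) atBot := by
      refine Tendsto.congr' heqp.symm ?_
      exact tendsto_atBot_add_right_of_ge' _ 1 hMinv
        (hhalf.eventually (eventually_le_nhds (by norm_num : (0:ℝ) < 1)))
    have hdm : Tendsto (fun σ : ℝ => (z - k - σ ^ 2 * τ / 2) / (σ * Real.sqrt τ))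
        (𝓝[>] 0) atBot := by
      refine Tendsto.congr' heqm.symm ?_
      have := tendsto_atBot_add_right_of_ge' _ 1 hMinv
        (hhalfneg.eventually (eventually_le_nhds (by norm_num : (0:ℝ) < 1)))
      simpa [sub_eq_add_neg] using this
    have := ((normCDF_tendsto_atBot.comp hdp).const_mul (Real.exp z)).sub
      ((normCDF_tendsto_atBot.comp hdm).const_mul (Real.exp k))
    rw [hmax]
    unfold uBS
    simpa [uBS, Function.comp] using this
  · -- z = k : both d± → 0, limit 0
    have hzk : z = k := by linarith
    have hmax : max (Real.exp z - Real.exp k) 0 = 0 := by simp [hzk]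
    have hz0 : Tendsto (fun σ : ℝ => (z - k) * (σ * Real.sqrt τ)⁻¹) (𝓝[>] 0) (𝓝 0) := by
      have : z - k = 0 := hm
      simp [this]
    have hdp : Tendsto (fun σ : ℝ => (z - k + σ ^ 2 * τ / 2) / (σ * Real.sqrt τ))
        (𝓝[>] 0) (𝓝 0) := by
      refine Tendsto.congr' heqp.symm ?_
      simpa using hz0.add hhalf
    have hdm : Tendsto (fun σ : ℝ => (z - k - σ ^ 2 * τ / 2) / (σ * Real.sqrt τ))
        (𝓝[>] 0) (𝓝 0) := by
      refine Tendsto.congr' heqm.symm ?_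
      simpa using hz0.sub hhalf
    have hT := (((normCDF_continuous.tendsto 0).comp hdp).const_mul (Real.exp z)).sub
      (((normCDF_continuous.tendsto 0).comp hdm).const_mul (Real.exp k))
    rw [hmax]
    have h0 : Real.exp z * normCDF 0 - Real.exp k * normCDF 0 = 0 := by rw [hzk]; ring
    have hT' : Tendsto (uBS τ z k) (𝓝[>] (0:ℝ))
        (𝓝 (Real.exp z * normCDF 0 - Real.exp k * normCDF 0)) := by
      unfold uBS
      simpa [uBS, Function.comp] using hT
    rwa [h0] at hT'
  · -- z > k : both d± → +∞, limit exp z - exp k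
    have hmax : max (Real.exp z - Real.exp k) 0 = Real.exp z - Real.exp k :=
      max_eq_left (sub_nonneg.mpr (Real.exp_le_exp.mpr (by linarith)))
    have hMinv : Tendsto (fun σ : ℝ => (z - k) * (σ * Real.sqrt τ)⁻¹) (𝓝[>] 0) atTop :=
      hinv.const_mul_atTop hm
    have hdp : Tendsto (fun σ : ℝ => (z - k + σ ^ 2 * τ / 2) / (σ * Real.sqrt τ))
        (𝓝[>] 0) atTop := by
      refine Tendsto.congr' heqp.symm ?_
      exact tendsto_atTop_add_right_of_le' _ (-1) hMinv
        (hhalf.eventually (eventually_ge_nhds (by norm_num : (-1:ℝ) < 0)))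
    have hdm : Tendsto (fun σ : ℝ => (z - k - σ ^ 2 * τ / 2) / (σ * Real.sqrt τ))
        (𝓝[>] 0) atTop := by
      refine Tendsto.congr' heqm.symm ?_
      have := tendsto_atTop_add_right_of_le' _ (-1) hMinv
        (hhalfneg.eventually (eventually_ge_nhds (by norm_num : (-1:ℝ) < 0)))
      simpa [sub_eq_add_neg] using this
    have := ((normCDF_tendsto_atTop.comp hdp).const_mul (Real.exp z)).sub
      ((normCDF_tendsto_atTop.comp hdm).const_mul (Real.exp k))
    rw [hmax]
    unfold uBS
    simpa [uBS, Function.comp] using this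

end Limits

lemma uBS_strictMonoOn {τ z k : ℝ} (hτ : 0 < τ) :
    StrictMonoOn (uBS τ z k) (Set.Ioi 0) := by
  apply strictMonoOn_of_deriv_pos (convex_Ioi 0)
  · intro x hx
    exact (uBS_hasDerivAt hτ hx).continuousAt.continuousWithinAt
  · intro x hx
    rw [interior_Ioi] at hx
    rw [(uBS_hasDerivAt hτ hx).deriv]
    exact mul_pos (mul_pos (Real.exp_pos z) (npdf_pos _)) (Real.sqrt_pos.mpr hτ)

theorem implied_volatility_well_defined
    (τ z k : ℝ) (hτ : 0 < τ) :
    ∀ u : ℝ, max (Real.exp z - Real.exp k) 0 < u → u < Real.exp z →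
      ∃! σ : ℝ, 0 < σ ∧ uBS τ z k σ = u := by
  intro u h1 h2
  have hmono := uBS_strictMonoOn (z := z) (k := k) hτ
  -- small σ with uBS < u
  have hev1 : ∀ᶠ σ in 𝓝[>] (0:ℝ), uBS τ z k σ < u :=
    (tendsto_uBS_zero hτ).eventually_lt_const h1
  obtain ⟨σ₁, hσ₁u, hσ₁pos⟩ := (hev1.and self_mem_nhdsWithin).exists
  have hσ₁pos : (0:ℝ) < σ₁ := hσ₁pos
  -- large σ with uBS > u
  have hev2 : ∀ᶠ σ in atTop, u < uBS τ z k σ :=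
    (tendsto_uBS_atTop hτ).eventually_const_lt h2
  obtain ⟨σ₂, hσ₂u, hσ₁₂⟩ := (hev2.and (eventually_gt_atTop σ₁)).exists
  have hcont : ContinuousOn (uBS τ z k) (Set.Icc σ₁ σ₂) := by
    intro x hx
    exact (uBS_hasDerivAt hτ (lt_of_lt_of_le hσ₁pos hx.1)).continuousAt.continuousWithinAt
  have hmem : u ∈ Set.Icc (uBS τ z k σ₁) (uBS τ z k σ₂) := ⟨hσ₁u.le, hσ₂u.le⟩
  obtain ⟨σ, hσmem, hσeq⟩ := intermediate_value_Icc hσ₁₂.le hcont hmem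
  have hσpos : 0 < σ := lt_of_lt_of_le hσ₁pos hσmem.1
  refine ⟨σ, ⟨hσpos, hσeq⟩, ?_⟩
  rintro y ⟨hypos, hyeq⟩
  exact hmono.injOn hypos hσpos (hyeq.trans hσeq.symm)
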